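/- Let 0 < β₀ ≤ β₁ with β₀ ≤ a(x) ≤ β₁ and β₀ ≤ ã(x) ≤ β₁ for all x ∈ Ω, let c₀ > 0, 0 < h ≤ 1, M ≥ 0, K ≥ 0 and 1 ≤ p ≤ 2, with μ(ω) ≤ c₀ h² and ‖∇u(x)‖ ≤ M for almost every x ∈ ω. Let u, ũ : ℝ² → ℝ be differentiable functions such that B(u,u) = B̃(ũ,u) and B(u,ũ) = B̃(ũ,ũ). If |∫_Ω a ‖∇u‖² dx − ∫_Ω ã ‖∇ũ‖² dx| ≤ K h^p, then |∫_Ω a ‖∇u‖² dx − ∫_Ω ã ‖∇ũ‖² dx| ≤ √(c₀ |a₀ − a₁|) · M · √(K + (β₁/β₀) · (K + |a₀ − a₁| c₀ M²)) · h^{1 + p/2}. -/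

import Mathlib

open MeasureTheory
open scoped RealInnerProductSpace

private lemma amgm_sqrt_aux {A B X : ℝ} (hA : 0 < A) (hB : 0 < B)
    (h : ∀ t : ℝ, 0 < t → X ≤ (t * A + B / t) / 2) : X ≤ Real.sqrt (A * B) := by
  have hAB : 0 < A * B := mul_pos hA hB
  have hs : 0 < Real.sqrt (A * B) := Real.sqrt_pos.2 hAB
  have h2 : Real.sqrt A ^ 2 = A := Real.sq_sqrt hA.le
  have h3 : Real.sqrt B ^ 2 = B := Real.sq_sqrt hB.le
  calc X ≤ (Real.sqrt (A*B)/A * A + B / (Real.sqrt (A*B)/A)) / 2 := h _ (div_pos hs hA)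
    _ = Real.sqrt (A*B) := by field_simp; nlinarith [h2, h3, hs, Real.sq_sqrt hAB.le]

set_option maxHeartbeats 4000000 in
theorem stmt_7
    (Ω ω : Set (EuclideanSpace ℝ (Fin 2)))
    (hΩmeas : MeasurableSet Ω) (hΩfin : volume Ω < ⊤)
    (hωmeas : MeasurableSet ω) (hωsub : ω ⊆ Ω)
    (a₀ a₁ : ℝ) (a atil : EuclideanSpace ℝ (Fin 2) → ℝ)
    (hameas : Measurable a) (hatilmeas : Measurable atil)
    (ha_eq : ∀ x ∈ Ω \ ω, a x = atil x)
    (ha_diff : ∀ x ∈ ω, atil x - a x = a₀ - a₁)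
    (β₀ β₁ : ℝ) (hβ₀ : 0 < β₀) (hβ : β₀ ≤ β₁)
    (ha_bdd : ∀ x ∈ Ω, β₀ ≤ a x ∧ a x ≤ β₁)
    (hatil_bdd : ∀ x ∈ Ω, β₀ ≤ atil x ∧ atil x ≤ β₁)
    (u util : EuclideanSpace ℝ (Fin 2) → ℝ)
    (hu : Differentiable ℝ u) (hutil : Differentiable ℝ util)
    (c₀ h M K p : ℝ) (hc₀ : 0 < c₀) (hh0 : 0 < h) (hh1 : h ≤ 1)
    (hM0 : 0 ≤ M) (hK : 0 ≤ K) (hp1 : 1 ≤ p) (hp2 : p ≤ 2)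
    (hωvol : (volume ω).toReal ≤ c₀ * h ^ 2)
    (hM : ∀ᵐ x ∂volume.restrict ω, ‖gradient u x‖ ≤ M)
    (hint1 : IntegrableOn (fun x => a x * ‖gradient u x‖ ^ 2) Ω)
    (hint2 : IntegrableOn (fun x => atil x * ‖gradient util x‖ ^ 2) Ω)
    (hint3 : IntegrableOn (fun x => atil x * ⟪gradient util x, gradient u x⟫) Ω)
    (hint4 : IntegrableOn (fun x => a x * ⟪gradient u x, gradient util x⟫) Ω)
    (hint5 : IntegrableOn (fun x => ‖gradient u x‖ ^ 2) Ω)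
    (hint6 : IntegrableOn (fun x => ‖gradient util x‖ ^ 2) Ω)
    (hB1 : (∫ x in Ω, a x * ‖gradient u x‖ ^ 2)
        = ∫ x in Ω, atil x * ⟪gradient util x, gradient u x⟫)
    (hB2 : (∫ x in Ω, a x * ⟪gradient u x, gradient util x⟫)
        = ∫ x in Ω, atil x * ‖gradient util x‖ ^ 2)
    (hKp : |(∫ x in Ω, a x * ‖gradient u x‖ ^ 2) - ∫ x in Ω, atil x * ‖gradient util x‖ ^ 2|
        ≤ K * h ^ p) :
    |(∫ x in Ω, a x * ‖gradient u x‖ ^ 2) - ∫ x in Ω, atil x * ‖gradient util x‖ ^ 2|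
      ≤ Real.sqrt (c₀ * |a₀ - a₁|) * M
          * Real.sqrt (K + (β₁ / β₀) * (K + |a₀ - a₁| * c₀ * M ^ 2))
          * h ^ (1 + p / 2) := by
  have hβ₁ : 0 < β₁ := lt_of_lt_of_le hβ₀ hβ
  set d : ℝ := a₀ - a₁ with hd_def
  set A : ℝ := ∫ x in Ω, a x * ‖gradient u x‖ ^ 2 with hA_def
  set T : ℝ := ∫ x in Ω, atil x * ‖gradient util x‖ ^ 2 with hT_def
  set I₁ : ℝ := ∫ x in ω, ‖gradient u x‖ ^ 2 with hI₁_def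
  set I₂ : ℝ := ∫ x in ω, ‖gradient util x‖ ^ 2 with hI₂_def
  set S : ℝ := K + β₁ / β₀ * (K + |d| * c₀ * M ^ 2) with hS_def
  -- measurability of gradients
  have hgrad : ∀ v : EuclideanSpace ℝ (Fin 2) → ℝ, Measurable (fun x => gradient v x) := by
    intro v
    simp only [gradient]
    exact ((InnerProductSpace.toDual ℝ
      (EuclideanSpace ℝ (Fin 2))).symm.continuous.measurable).comp (measurable_fderiv ℝ v)
  have hgu_meas : Measurable (fun x => gradient u x) := hgrad u
  have hgv_meas : Measurable (fun x => gradient util x) := hgrad util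
  have hg_meas : Measurable (fun x => ⟪gradient u x, gradient util x⟫) :=
    hgu_meas.inner hgv_meas
  have hωfin : volume ω < ⊤ := lt_of_le_of_lt (measure_mono hωsub) hΩfin
  -- a.e. bounds on the restricted measures
  have ha_ae : ∀ᵐ x ∂volume.restrict Ω, ‖a x‖ ≤ β₁ := by
    filter_upwards [ae_restrict_mem hΩmeas] with x hx
    have h1 := ha_bdd x hx
    rw [Real.norm_eq_abs, abs_le]; constructor <;> nlinarith
  have hatil_ae : ∀ᵐ x ∂volume.restrict Ω, ‖atil x‖ ≤ β₁ := by
    filter_upwards [ae_restrict_mem hΩmeas] with x hx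
    have h1 := hatil_bdd x hx
    rw [Real.norm_eq_abs, abs_le]; constructor <;> nlinarith
  -- integrability facts
  have hag : IntegrableOn (fun x => ⟪gradient u x, gradient util x⟫) Ω := by
    have h1 : IntegrableOn
        (fun x => (a x)⁻¹ * (a x * ⟪gradient u x, gradient util x⟫)) Ω := by
      refine hint4.bdd_mul (c := β₀⁻¹) hameas.inv.aestronglyMeasurable ?_
      filter_upwards [ae_restrict_mem hΩmeas] with x hx
      have h2 := (ha_bdd x hx).1
      have h3 : 0 < a x := lt_of_lt_of_le hβ₀ h2
      rw [Real.norm_eq_abs, abs_of_pos (inv_pos.2 h3)]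
      exact inv_anti₀ hβ₀ h2
    refine h1.congr ?_
    filter_upwards [ae_restrict_mem hΩmeas] with x hx
    have h2 : a x ≠ 0 := ne_of_gt (lt_of_lt_of_le hβ₀ (ha_bdd x hx).1)
    field_simp
  have hfun_comm : (fun x => atil x * ⟪gradient util x, gradient u x⟫)
      = fun x => atil x * ⟪gradient u x, gradient util x⟫ := by
    funext x; rw [real_inner_comm]
  have hint3' : IntegrableOn (fun x => atil x * ⟪gradient u x, gradient util x⟫) Ω := by
    rw [← hfun_comm]; exact hint3
  have hagv2 : IntegrableOn (fun x => a x * ‖gradient util x‖ ^ 2) Ω :=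
    hint6.bdd_mul hameas.aestronglyMeasurable ha_ae
  have hatgu2 : IntegrableOn (fun x => atil x * ‖gradient u x‖ ^ 2) Ω :=
    hint5.bdd_mul hatilmeas.aestronglyMeasurable hatil_ae
  have hq_int : IntegrableOn (fun x => ‖gradient u x - gradient util x‖ ^ 2) Ω := by
    have heq : (fun x => ‖gradient u x - gradient util x‖ ^ 2)
        = fun x => ‖gradient u x‖ ^ 2 - 2 * ⟪gradient u x, gradient util x⟫
            + ‖gradient util x‖ ^ 2 := by
      funext x; rw [norm_sub_sq_real]
    rw [heq]; exact (hint5.sub (hag.const_mul 2)).add hint6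
  have hFint : IntegrableOn (fun x => a x * ‖gradient u x - gradient util x‖ ^ 2) Ω :=
    hq_int.bdd_mul hameas.aestronglyMeasurable ha_ae
  have hGint : IntegrableOn (fun x => atil x * ‖gradient u x - gradient util x‖ ^ 2) Ω :=
    hq_int.bdd_mul hatilmeas.aestronglyMeasurable hatil_ae
  have hconst1 : IntegrableOn (fun _ => (1:ℝ)) ω := integrableOn_const hωfin.ne
  have hIntNorm : IntegrableOn (fun x => ‖gradient util x‖) ω := by
    have h2 : IntegrableOn (fun x => (1 + ‖gradient util x‖ ^ 2) / 2) ω :=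
      (hconst1.add (hint6.mono_set hωsub)).div_const 2
    refine h2.mono' hgv_meas.norm.aestronglyMeasurable ?_
    refine Filter.Eventually.of_forall fun x => ?_
    rw [Real.norm_eq_abs, abs_of_nonneg (norm_nonneg _)]
    nlinarith [sq_nonneg (‖gradient util x‖ - 1)]
  -- key computation : ∫_Ω (atil - a) f = d ∫_ω f
  have key : ∀ f : EuclideanSpace ℝ (Fin 2) → ℝ,
      (∫ x in Ω, (atil x - a x) * f x) = d * ∫ x in ω, f x := by
    intro f
    rw [setIntegral_eq_of_subset_of_forall_diff_eq_zero hΩmeas hωsub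
      (fun x hx => by rw [ha_eq x hx]; ring)]
    rw [setIntegral_congr_fun hωmeas
      (fun x hx => by rw [ha_diff x hx] : Set.EqOn _ (fun x => d * f x) ω)]
    exact integral_const_mul d f
  have hB1' : A = ∫ x in Ω, atil x * ⟪gradient u x, gradient util x⟫ := by
    rw [hB1, hfun_comm]
  -- identity: A - T = d * ∫_ω ⟪∇u, ∇ũ⟫
  have hD : A - T = d * ∫ x in ω, ⟪gradient u x, gradient util x⟫ := by
    rw [hB1', ← hB2, ← integral_sub hint3' hint4, ← key]
    congr 1; funext x; ring
  have hI2_eq : ∫ x in Ω, a x * ‖gradient util x‖ ^ 2 = T - d * I₂ := by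
    have h1 : (∫ x in Ω, (atil x - a x) * ‖gradient util x‖ ^ 2) = d * I₂ := key _
    have h2 : (∫ x in Ω, (atil x - a x) * ‖gradient util x‖ ^ 2)
        = T - ∫ x in Ω, a x * ‖gradient util x‖ ^ 2 := by
      rw [← integral_sub hint2 hagv2]; congr 1; funext x; ring
    linarith
  have hI1_eq : ∫ x in Ω, atil x * ‖gradient u x‖ ^ 2 = A + d * I₁ := by
    have h1 : (∫ x in Ω, (atil x - a x) * ‖gradient u x‖ ^ 2) = d * I₁ := key _
    have h2 : (∫ x in Ω, (atil x - a x) * ‖gradient u x‖ ^ 2)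
        = (∫ x in Ω, atil x * ‖gradient u x‖ ^ 2) - A := by
      rw [← integral_sub hatgu2 hint1]; congr 1; funext x; ring
    linarith
  set F : ℝ := ∫ x in Ω, a x * ‖gradient u x - gradient util x‖ ^ 2 with hF_def
  set G : ℝ := ∫ x in Ω, atil x * ‖gradient u x - gradient util x‖ ^ 2 with hG_def
  have hsub1 : IntegrableOn (fun x => a x * ‖gradient u x‖ ^ 2
      - 2 * (a x * ⟪gradient u x, gradient util x⟫)) Ω := hint1.sub (hint4.const_mul 2)
  have hsub2 : IntegrableOn (fun x => atil x * ‖gradient u x‖ ^ 2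
      - 2 * (atil x * ⟪gradient u x, gradient util x⟫)) Ω := hatgu2.sub (hint3'.const_mul 2)
  have hF : F = (A - T) - d * I₂ := by
    have e1 : F = (∫ x in Ω, (a x * ‖gradient u x‖ ^ 2
          - 2 * (a x * ⟪gradient u x, gradient util x⟫)))
        + ∫ x in Ω, a x * ‖gradient util x‖ ^ 2 := by
      rw [hF_def, ← integral_add hsub1 hagv2]
      congr 1; funext x; rw [norm_sub_sq_real]; ring
    have e2 : (∫ x in Ω, (a x * ‖gradient u x‖ ^ 2
          - 2 * (a x * ⟪gradient u x, gradient util x⟫))) = A - 2 * T := by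
      rw [integral_sub hint1 (hint4.const_mul 2), integral_const_mul, hB2, ← hA_def]
    rw [e1, e2, hI2_eq]; ring
  have hG : G = d * I₁ - (A - T) := by
    have e1 : G = (∫ x in Ω, (atil x * ‖gradient u x‖ ^ 2
          - 2 * (atil x * ⟪gradient u x, gradient util x⟫)))
        + ∫ x in Ω, atil x * ‖gradient util x‖ ^ 2 := by
      rw [hG_def, ← integral_add hsub2 hint2]
      congr 1; funext x; rw [norm_sub_sq_real]; ring
    have e2 : (∫ x in Ω, (atil x * ‖gradient u x‖ ^ 2
          - 2 * (atil x * ⟪gradient u x, gradient util x⟫)))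
        = (A + d * I₁) - 2 * A := by
      rw [integral_sub hatgu2 (hint3'.const_mul 2), integral_const_mul, ← hB1', hI1_eq]
    rw [e1, e2, ← hT_def]; ring
  have hF0 : 0 ≤ F :=
    setIntegral_nonneg hΩmeas fun x hx =>
      mul_nonneg (le_trans hβ₀.le (ha_bdd x hx).1) (sq_nonneg _)
  have hI₁0 : 0 ≤ I₁ := setIntegral_nonneg hωmeas fun x _ => sq_nonneg _
  have hI₂0 : 0 ≤ I₂ := setIntegral_nonneg hωmeas fun x _ => sq_nonneg _
  have hFG : F ≤ β₁ / β₀ * G := by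
    calc F ≤ ∫ x in Ω, β₁ / β₀ * (atil x * ‖gradient u x - gradient util x‖ ^ 2) := by
          refine setIntegral_mono_on hFint (hGint.const_mul _) hΩmeas fun x hx => ?_
          have h1 := ha_bdd x hx
          have h2 := (hatil_bdd x hx).1
          have hq := sq_nonneg ‖gradient u x - gradient util x‖
          have h5 : a x * β₀ ≤ β₁ * atil x :=
            mul_le_mul h1.2 h2 hβ₀.le (by linarith)
          rw [div_mul_eq_mul_div, le_div_iff₀ hβ₀]
          nlinarith [mul_le_mul_of_nonneg_right h5 hq]
      _ = β₁ / β₀ * G := integral_const_mul _ _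
  -- pow comparison h² ≤ h^p
  have h2p : h ^ (2 : ℕ) ≤ h ^ p := by
    have h1 : h ^ (2 : ℝ) ≤ h ^ p := Real.rpow_le_rpow_of_exponent_ge hh0 hh1 hp2
    rwa [show ((2 : ℝ)) = ((2 : ℕ) : ℝ) by norm_num, Real.rpow_natCast] at h1
  have hhp0 : 0 < h ^ p := Real.rpow_pos_of_pos hh0 p
  have hI1_bdd : I₁ ≤ M ^ 2 * (volume ω).toReal := by
    have hconst2 : IntegrableOn (fun _ => M ^ 2) ω := integrableOn_const hωfin.ne
    have h1 : I₁ ≤ ∫ _ in ω, M ^ 2 := by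
      refine integral_mono_ae (hint5.mono_set hωsub) hconst2 ?_
      filter_upwards [hM] with x hx
      exact pow_le_pow_left₀ (norm_nonneg _) hx 2
    rwa [setIntegral_const, smul_eq_mul, mul_comm] at h1
  have hI1_fin : I₁ ≤ M ^ 2 * (c₀ * h ^ 2) := by
    refine hI1_bdd.trans (mul_le_mul_of_nonneg_left hωvol (sq_nonneg M))
  -- crucial bound : |d| * I₂ ≤ S * h^p
  have hβq : 0 ≤ β₁ / β₀ := by positivity
  have hdI2 : |d| * I₂ ≤ S * h ^ p := by
    have hSK : K * h ^ p ≤ S * h ^ p := by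
      have h0 : 0 ≤ β₁ / β₀ * (K + |d| * c₀ * M ^ 2) := by positivity
      have h1 : K ≤ S := by rw [hS_def]; linarith
      nlinarith [hhp0.le]
    rcases le_or_gt 0 d with hd | hd
    · rw [abs_of_nonneg hd]
      have h1 : d * I₂ = (A - T) - F := by linarith
      calc d * I₂ = (A - T) - F := h1
        _ ≤ |A - T| := by
            have := le_abs_self (A - T); linarith
        _ ≤ K * h ^ p := hKp
        _ ≤ S * h ^ p := hSK
    · rw [abs_of_neg hd]
      have habsd : |d| = -d := abs_of_neg hd
      have h1 : -d * I₂ = F - (A - T) := by linarith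
      have hG_bdd : G ≤ |d| * (c₀ * M ^ 2 * h ^ p) + K * h ^ p := by
        have h2 : d * I₁ ≤ |d| * I₁ := by
          have := le_abs_self d
          nlinarith
        have h3 : -(A - T) ≤ K * h ^ p := by
          have := neg_abs_le (A - T); linarith
        have h4 : |d| * I₁ ≤ |d| * (M ^ 2 * (c₀ * h ^ 2)) :=
          mul_le_mul_of_nonneg_left hI1_fin (abs_nonneg d)
        have h5 : |d| * (M ^ 2 * (c₀ * h ^ 2)) ≤ |d| * (c₀ * M ^ 2 * h ^ p) := by
          have h6 : M ^ 2 * (c₀ * h ^ 2) ≤ c₀ * M ^ 2 * h ^ p := by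
            nlinarith [sq_nonneg M, mul_nonneg (sq_nonneg M) hc₀.le]
          exact mul_le_mul_of_nonneg_left h6 (abs_nonneg d)
        linarith [hG]
      have h7 : F ≤ β₁ / β₀ * (|d| * (c₀ * M ^ 2 * h ^ p) + K * h ^ p) :=
        hFG.trans (mul_le_mul_of_nonneg_left hG_bdd hβq)
      have h8 : -(A - T) ≤ K * h ^ p := by
        have := neg_abs_le (A - T); linarith
      calc -d * I₂ = F - (A - T) := h1
        _ ≤ β₁ / β₀ * (|d| * (c₀ * M ^ 2 * h ^ p) + K * h ^ p) + K * h ^ p := by linarith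
        _ = S * h ^ p := by rw [hS_def]; ring
  -- the basic estimate |A - T| ≤ |d| * M * ∫_ω ‖∇ũ‖
  set N : ℝ := ∫ x in ω, ‖gradient util x‖ with hN_def
  have hN0 : 0 ≤ N := setIntegral_nonneg hωmeas fun x _ => norm_nonneg _
  have hDle : |A - T| ≤ |d| * (M * N) := by
    rw [hD, abs_mul]
    refine mul_le_mul_of_nonneg_left ?_ (abs_nonneg d)
    have h1 : ‖∫ x in ω, ⟪gradient u x, gradient util x⟫‖
        ≤ ∫ x in ω, M * ‖gradient util x‖ := by
      refine norm_integral_le_of_norm_le (hIntNorm.const_mul M) ?_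
      filter_upwards [hM] with x hx
      rw [Real.norm_eq_abs]
      calc |⟪gradient u x, gradient util x⟫| ≤ ‖gradient u x‖ * ‖gradient util x‖ :=
            abs_real_inner_le_norm _ _
        _ ≤ M * ‖gradient util x‖ := mul_le_mul_of_nonneg_right hx (norm_nonneg _)
    rw [Real.norm_eq_abs] at h1
    rwa [integral_const_mul, ← hN_def] at h1
  -- degenerate cases
  rcases eq_or_ne d 0 with hd0 | hd0
  · rw [hD, hd0, zero_mul, abs_zero]
    positivity
  rcases eq_or_lt_of_le hM0 with hM0' | hMpos
  · rw [← hM0'] at hDle ⊢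
    simp only [zero_mul, mul_zero] at hDle ⊢
    linarith
  -- main case
  have hdpos : 0 < |d| := abs_pos.2 hd0
  have hSpos : 0 < S := by
    have h1 : 0 < β₁ / β₀ := div_pos hβ₁ hβ₀
    have h2 : 0 < |d| * c₀ * M ^ 2 := by positivity
    have h3 : 0 < β₁ / β₀ * (K + |d| * c₀ * M ^ 2) := mul_pos h1 (by linarith)
    rw [hS_def]; linarith
  set A' : ℝ := |d| * M * c₀ * h ^ 2 with hA'_def
  set B' : ℝ := M * S * h ^ p with hB'_def
  have hA'pos : 0 < A' := by positivity
  have hB'pos : 0 < B' := by positivity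
  have hX : ∀ t : ℝ, 0 < t → |A - T| ≤ (t * A' + B' / t) / 2 := by
    intro t ht
    have hN_AM : N ≤ (t * (volume ω).toReal + I₂ / t) / 2 := by
      have hpt : ∀ x : EuclideanSpace ℝ (Fin 2),
          ‖gradient util x‖ ≤ (t + ‖gradient util x‖ ^ 2 / t) / 2 := by
        intro x
        have h1 : 0 ≤ (t - ‖gradient util x‖) ^ 2 / t := by positivity
        have h2 : (t - ‖gradient util x‖) ^ 2 / t
            = t + ‖gradient util x‖ ^ 2 / t - 2 * ‖gradient util x‖ := by
          field_simp; ring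
        linarith
      have hconst3 : IntegrableOn (fun _ => t) ω := integrableOn_const hωfin.ne
      have hint6' : IntegrableOn (fun x => ‖gradient util x‖ ^ 2 / t) ω :=
        (hint6.mono_set hωsub).div_const t
      have hintg : IntegrableOn (fun x => (t + ‖gradient util x‖ ^ 2 / t) / 2) ω :=
        (hconst3.add hint6').div_const 2
      calc N ≤ ∫ x in ω, (t + ‖gradient util x‖ ^ 2 / t) / 2 :=
            integral_mono hIntNorm hintg hpt
        _ = (t * (volume ω).toReal + I₂ / t) / 2 := by
            rw [integral_div, integral_add hconst3 hint6', setIntegral_const, integral_div]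
            simp only [smul_eq_mul, measureReal_def]
            ring
    have hωv0 : 0 ≤ (volume ω).toReal := ENNReal.toReal_nonneg
    have step1 : |A - T| ≤ |d| * M * ((t * (volume ω).toReal + I₂ / t) / 2) := by
      calc |A - T| ≤ |d| * (M * N) := hDle
        _ ≤ |d| * (M * ((t * (volume ω).toReal + I₂ / t) / 2)) := by
            refine mul_le_mul_of_nonneg_left ?_ (abs_nonneg d)
            exact mul_le_mul_of_nonneg_left hN_AM hM0
        _ = |d| * M * ((t * (volume ω).toReal + I₂ / t) / 2) := by ring
    refine step1.trans ?_
    have e1 : |d| * M * ((t * (volume ω).toReal + I₂ / t) / 2)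
        = (t * (|d| * M * (volume ω).toReal) + (M * (|d| * I₂)) / t) / 2 := by
      field_simp
    rw [e1]
    have h1 : |d| * M * (volume ω).toReal ≤ A' := by
      rw [hA'_def]
      calc |d| * M * (volume ω).toReal ≤ |d| * M * (c₀ * h ^ 2) := by
            exact mul_le_mul_of_nonneg_left hωvol (by positivity)
        _ = |d| * M * c₀ * h ^ 2 := by ring
    have h2 : M * (|d| * I₂) ≤ B' := by
      rw [hB'_def]
      calc M * (|d| * I₂) ≤ M * (S * h ^ p) := mul_le_mul_of_nonneg_left hdI2 hM0
        _ = M * S * h ^ p := by ring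
    have h3 : t * (|d| * M * (volume ω).toReal) ≤ t * A' :=
      mul_le_mul_of_nonneg_left h1 ht.le
    have h4 : (M * (|d| * I₂)) / t ≤ B' / t := by gcongr
    linarith
  have hmain : |A - T| ≤ Real.sqrt (A' * B') := amgm_sqrt_aux hA'pos hB'pos hX
  refine hmain.trans (le_of_eq ?_)
  -- compute the square root
  have hpow : h ^ (2 : ℕ) * h ^ p = h ^ ((2 : ℝ) + p) := by
    rw [Real.rpow_add hh0, show ((2 : ℝ)) = ((2 : ℕ) : ℝ) by norm_num, Real.rpow_natCast]
  have e2 : A' * B' = (c₀ * |d|) * (M ^ 2 * (S * h ^ ((2:ℝ) + p))) := by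
    rw [hA'_def, hB'_def, ← hpow]; ring
  have e3 : Real.sqrt (h ^ ((2:ℝ) + p)) = h ^ (1 + p / 2) := by
    rw [Real.sqrt_eq_rpow, ← Real.rpow_mul hh0.le]
    congr 1; ring
  rw [e2, Real.sqrt_mul (show (0:ℝ) ≤ c₀ * |d| by positivity) (M ^ 2 * (S * h ^ ((2:ℝ) + p))),
    Real.sqrt_mul (sq_nonneg M) (S * h ^ ((2:ℝ) + p)),
    Real.sqrt_mul hSpos.le (h ^ ((2:ℝ) + p)), Real.sqrt_sq hM0, e3]
  ring
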